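/- arXiv:2005.05108 — 5 statements merged into one kernel-verified Lean document; each statement's English description precedes it below -/
import Mathlib

section
/- Let G and H be groupoids and let d₀ : G → H be a functor satisfying the path-lifting property: for every object x of G and every isomorphism β : d₀(x) ≅ b in H, there exists an isomorphism φ : x ≅ x' in G with d₀(φ) = β (after identifying d₀(x') = b). Then for any functor q : K → H from a groupoid K, the strict pullback groupoid {(x,y) : d₀ x = q y} is equivalent to the comma (homotopy) pullback groupoid whose objects are triples (x, y, σ : d₀ x ≅ q y). -/
open CategoryTheory

/-- If `d₀ : G ⥤ H` is a fibration of groupoids (path-lifting property), then for any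
functor `q : K ⥤ H` of groupoids, the strict pullback (realized as the full subcategory
of the comma category on objects whose comparison isomorphism is an identity `eqToHom`)
is equivalent to the comma (homotopy) pullback: the inclusion is an equivalence. -/
theorem strictPullback_equiv_homotopyPullback_of_fibration
    {G H K : Type} [Groupoid G] [Groupoid H] [Groupoid K]
    (d₀ : G ⥤ H) (q : K ⥤ H)
    (hfib : ∀ (x : G) (b : H) (β : d₀.obj x ≅ b),
      ∃ (x' : G) (φ : x ≅ x') (h : d₀.obj x' = b),
        d₀.map φ.hom = β.hom ≫ eqToHom h.symm) :
    (ObjectProperty.ι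
      (fun o : Comma d₀ q => ∃ h : d₀.obj o.left = q.obj o.right, o.hom = eqToHom h)).IsEquivalence := by
  have essSurj : (ObjectProperty.ι
      (fun o : Comma d₀ q => ∃ h : d₀.obj o.left = q.obj o.right, o.hom = eqToHom h)).EssSurj := by
    constructor
    intro o
    obtain ⟨x', φ, h, hφ⟩ := hfib o.left (q.obj o.right) (asIso o.hom)
    refine ⟨⟨⟨x', o.right, eqToHom h⟩, ⟨h, rfl⟩⟩, ⟨?_⟩⟩
    refine Comma.isoMk φ.symm (Iso.refl _) ?_
    have hinv : d₀.map φ.inv = eqToHom h ≫ Groupoid.inv o.hom := by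
      rw [← cancel_epi (d₀.map φ.hom), ← d₀.map_comp, φ.hom_inv_id, hφ]
      simp [Groupoid.inv_eq_inv]
    simp [hinv, Groupoid.inv_eq_inv]
  exact { }
end

section
/- Let H be a well-founded forward hypergraph with node set N and order relation ≤ (the reflexive-transitive closure of the immediate-precedence relation), whose in-boundary is a finite set B. Then there is a bijection between lowersets L ⊆ N of the poset (N, ≤) and open sub-B-hypergraphs G ⊆ H whose in-boundary is again B: the bijection sends a sub-hypergraph to its set of nodes, and a lowerset L to the sub-hypergraph consisting of the nodes in L, all hyperedges incident to some node of L, and all hyperedges of B. -/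
/-- A (directed) hypergraph: a diagram of sets `A ← I → N ← O → A` in which both
spans are relations and the maps `I → N ← O` have finite fibres. -/
structure DirHypergraph where
  A : Type
  I : Type
  N : Type
  O : Type
  iA : I → A
  iN : I → N
  oN : O → N
  oA : O → A
  rel_in : Function.Injective (fun i => (iA i, iN i))
  rel_out : Function.Injective (fun o => (oN o, oA o))
  fin_in : ∀ x : N, Set.Finite {i | iN i = x}
  fin_out : ∀ x : N, Set.Finite {o | oN o = x}

/-- Forward hypergraph: every hyperedge is outgoing of at most one node. -/
def DirHypergraph.Forward (H : DirHypergraph) : Prop := Function.Injective H.oA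

/-- Immediate precedence `x ⋖ y`: some hyperedge is outgoing of `x` and incoming to `y`. -/
def DirHypergraph.prec (H : DirHypergraph) (x y : H.N) : Prop :=
  ∃ (o : H.O) (i : H.I), H.oN o = x ∧ H.iN i = y ∧ H.oA o = H.iA i

/-- The reflexive-transitive closure `≤` of `⋖`. -/
def DirHypergraph.le (H : DirHypergraph) : H.N → H.N → Prop :=
  Relation.ReflTransGen H.prec

/-- Well-founded: the strict order `<` is irreflexive (no directed cycles) and
every principal lowerset `{x : x ≤ y}` is finite. -/
def DirHypergraph.WellFoundedHgr (H : DirHypergraph) : Prop :=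
  (∀ x : H.N, ¬ Relation.TransGen H.prec x x) ∧ ∀ y : H.N, Set.Finite {x | H.le x y}

/-- The in-boundary: hyperedges not outgoing of any node. -/
def DirHypergraph.inBoundary (H : DirHypergraph) : Set H.A := {a | a ∉ Set.range H.oA}

/-- An open sub-`B`-hypergraph of `H`: componentwise subsets, closed under the
structure maps, etale over the nodes (the `I`- and `O`-subsets are the full
preimages of the node subset), and with in-boundary equal to the in-boundary
`B` of `H`. -/
structure OpenSubB (H : DirHypergraph) where
  SA : Set H.A
  SI : Set H.I
  SN : Set H.N
  SO : Set H.O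
  etale_in : SI = H.iN ⁻¹' SN
  etale_out : SO = H.oN ⁻¹' SN
  closed_iA : ∀ i ∈ SI, H.iA i ∈ SA
  closed_oA : ∀ o ∈ SO, H.oA o ∈ SA
  bd : SA \ (H.oA '' SO) = H.inBoundary

/-- Auxiliary: the sub-hypergraph associated to a lowerset. -/
def DirHypergraph.toSub (H : DirHypergraph) (L : Set H.N)
    (hL : ∀ ⦃x y : H.N⦄, H.le x y → y ∈ L → x ∈ L) : OpenSubB H where
  SA := H.oA '' (H.oN ⁻¹' L) ∪ H.inBoundary
  SI := H.iN ⁻¹' L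
  SN := L
  SO := H.oN ⁻¹' L
  etale_in := rfl
  etale_out := rfl
  closed_iA := fun i hi => by
    by_cases h : H.iA i ∈ Set.range H.oA
    · obtain ⟨o, ho⟩ := h
      exact Or.inl ⟨o, hL (Relation.ReflTransGen.single ⟨o, i, rfl, rfl, ho⟩) hi, ho⟩
    · exact Or.inr h
  closed_oA := fun o ho => Or.inl ⟨o, ho, rfl⟩
  bd := by
    ext a
    constructor
    · rintro ⟨ha, hna⟩
      cases ha with
      | inl h => exact absurd h hna
      | inr h => exact h
    · intro ha
      refine ⟨Or.inr ha, ?_⟩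
      rintro ⟨o, _, rfl⟩
      exact ha ⟨o, rfl⟩

lemma DirHypergraph.sub_lower {H : DirHypergraph} (hfwd : H.Forward) (G : OpenSubB H) :
    ∀ ⦃x y : H.N⦄, H.le x y → y ∈ G.SN → x ∈ G.SN := by
  intro x y hxy hy
  induction hxy using Relation.ReflTransGen.head_induction_on with
  | refl => exact hy
  | head hstep _ ih =>
    obtain ⟨o, i, ho, hi, hoi⟩ := hstep
    have hiSI : i ∈ G.SI := by rw [G.etale_in]; show H.iN i ∈ G.SN; rw [hi]; exact ih
    have haSA : H.oA o ∈ G.SA := hoi ▸ G.closed_iA i hiSI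
    have hnb : H.oA o ∉ H.inBoundary := fun h => h ⟨o, rfl⟩
    have : H.oA o ∈ H.oA '' G.SO := by
      by_contra hc
      exact hnb (G.bd ▸ ⟨haSA, hc⟩)
    obtain ⟨o', ho', heq⟩ := this
    have : o' = o := hfwd heq
    subst this
    rw [G.etale_out] at ho'
    exact ho ▸ ho'

lemma DirHypergraph.SA_eq {H : DirHypergraph} (G : OpenSubB H) :
    G.SA = H.oA '' G.SO ∪ H.inBoundary := by
  ext a
  constructor
  · intro ha
    by_cases h : a ∈ H.oA '' G.SO
    · exact Or.inl h
    · exact Or.inr (G.bd ▸ ⟨ha, h⟩)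
  · rintro (⟨o, ho, rfl⟩ | h)
    · exact G.closed_oA o ho
    · rw [← G.bd] at h
      exact h.1

/-- For a well-founded forward hypergraph `H` with finite in-boundary `B`, the
lowersets of the node poset `(N, ≤)` are in bijection with the open
sub-`B`-hypergraphs of `H`, the bijection being given by taking the node set. -/
theorem lowersets_equiv_subBhypergraphs (H : DirHypergraph)
    (hfwd : H.Forward) (hwf : H.WellFoundedHgr) (hBfin : H.inBoundary.Finite) :
    ∃ e : {L : Set H.N // ∀ ⦃x y : H.N⦄, H.le x y → y ∈ L → x ∈ L} ≃ OpenSubB H,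
      ∀ L, (e L).SN = L.1 := by
  refine ⟨{
    toFun := fun L => H.toSub L.1 L.2
    invFun := fun G => ⟨G.SN, DirHypergraph.sub_lower hfwd G⟩
    left_inv := fun L => rfl
    right_inv := fun G => ?_ }, fun L => rfl⟩
  obtain ⟨SA, SI, SN, SO, h1, h2, h3, h4, h5⟩ := G
  have hSA : SA = H.oA '' SO ∪ H.inBoundary :=
    DirHypergraph.SA_eq ⟨SA, SI, SN, SO, h1, h2, h3, h4, h5⟩
  subst h1 h2 hSA
  rfl
end

section
/- Let P be a grounded Petri net (every transition has nonempty pre-set) and fix an initial marking given by a finite set B. Then every morphism of B-P-processes is injective. Concretely: if G and H are finite acyclic graphs equipped with etale maps to P whose in-boundaries are identified with B, and f : G → H is an etale map of graphs over P restricting to the identity on B, then f is injective on nodes and on edges. -/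
/-- A whole-grain Petri net: a diagram of finite sets `S ← I → T ← O → S`. -/
structure PetriNet where
  S : Type
  I : Type
  T : Type
  O : Type
  [finS : Finite S]
  [finI : Finite I]
  [finT : Finite T]
  [finO : Finite O]
  sI : I → S
  tI : I → T
  tO : O → T
  sO : O → S

/-- A graph (AINOA style): a diagram of finite sets `A ← A_N → N ← _N A → A`
with the outer maps injective. -/
structure PNGraph where
  A : Type
  AN : Type
  N : Type
  NA : Type
  [finA : Finite A]
  [finAN : Finite AN]
  [finN : Finite N]
  [finNA : Finite NA]
  srcEdge : AN → A
  srcNode : AN → N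
  tgtNode : NA → N
  tgtEdge : NA → A
  inj_srcEdge : Function.Injective srcEdge
  inj_tgtEdge : Function.Injective tgtEdge

/-- `x ⋖ y`: there is an inner edge from node `x` to node `y`. -/
def PNGraph.prec (G : PNGraph) (x y : G.N) : Prop :=
  ∃ (o : G.NA) (i : G.AN), G.tgtNode o = x ∧ G.srcNode i = y ∧ G.tgtEdge o = G.srcEdge i

/-- Acyclicity: no directed cycles. -/
def PNGraph.Acyclic (G : PNGraph) : Prop := ∀ x : G.N, ¬ Relation.TransGen G.prec x x

/-- In-boundary: edges not outgoing of any node. -/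
def PNGraph.inBoundary (G : PNGraph) : Set G.A := {a | a ∉ Set.range G.tgtEdge}

/-- Out-boundary: edges not incoming to any node. -/
def PNGraph.outBoundary (G : PNGraph) : Set G.A := {a | a ∉ Set.range G.srcEdge}

/-- An etale map from a graph `G` to a Petri net `P`: componentwise maps with the
two middle squares pullbacks. -/
structure EtaleMap (G : PNGraph) (P : PetriNet) where
  mapA : G.A → P.S
  mapI : G.AN → P.I
  mapN : G.N → P.T
  mapO : G.NA → P.O
  comm_sI : ∀ m, P.sI (mapI m) = mapA (G.srcEdge m)
  comm_tI : ∀ m, P.tI (mapI m) = mapN (G.srcNode m)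
  comm_tO : ∀ o, P.tO (mapO o) = mapN (G.tgtNode o)
  comm_sO : ∀ o, P.sO (mapO o) = mapA (G.tgtEdge o)
  etale_in : ∀ (x : G.N) (i : P.I), P.tI i = mapN x →
      ∃! m : G.AN, G.srcNode m = x ∧ mapI m = i
  etale_out : ∀ (x : G.N) (o : P.O), P.tO o = mapN x →
      ∃! m : G.NA, G.tgtNode m = x ∧ mapO m = o

/-- An etale map of graphs: componentwise maps with the two middle squares pullbacks. -/
structure GraphMap (G H : PNGraph) where
  mapA : G.A → H.A
  mapAN : G.AN → H.AN
  mapN : G.N → H.N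
  mapNA : G.NA → H.NA
  comm_srcEdge : ∀ m, H.srcEdge (mapAN m) = mapA (G.srcEdge m)
  comm_srcNode : ∀ m, H.srcNode (mapAN m) = mapN (G.srcNode m)
  comm_tgtNode : ∀ o, H.tgtNode (mapNA o) = mapN (G.tgtNode o)
  comm_tgtEdge : ∀ o, H.tgtEdge (mapNA o) = mapA (G.tgtEdge o)
  etale_in : ∀ (x : G.N) (m' : H.AN), H.srcNode m' = mapN x →
      ∃! m : G.AN, G.srcNode m = x ∧ mapAN m = m'
  etale_out : ∀ (x : G.N) (o' : H.NA), H.tgtNode o' = mapN x →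
      ∃! o : G.NA, G.tgtNode o = x ∧ mapNA o = o'

/-- `f : G → H` is a map over `P` with respect to etale maps `p : G → P`, `q : H → P`. -/
def GraphMap.OverP {G H : PNGraph} {P : PetriNet} (f : GraphMap G H)
    (p : EtaleMap G P) (q : EtaleMap H P) : Prop :=
  (∀ a, q.mapA (f.mapA a) = p.mapA a) ∧
  (∀ m, q.mapI (f.mapAN m) = p.mapI m) ∧
  (∀ x, q.mapN (f.mapN x) = p.mapN x) ∧
  (∀ o, q.mapO (f.mapNA o) = p.mapO o)

/-- For a grounded Petri net `P` (every transition has nonempty pre-set) with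
initial marking `B`, every morphism of `B`-`P`-processes is injective (on nodes
and on edges). -/
theorem morphism_of_BPprocesses_injective (P : PetriNet)
    (hground : Function.Surjective P.tI)
    (B : Type) [Finite B]
    (G H : PNGraph) (hG : G.Acyclic) (hH : H.Acyclic)
    (p : EtaleMap G P) (q : EtaleMap H P)
    (βG : B ≃ {a : G.A // a ∈ G.inBoundary})
    (βH : B ≃ {a : H.A // a ∈ H.inBoundary})
    (f : GraphMap G H) (hover : f.OverP p q)
    (hB : ∀ b : B, f.mapA (βG b).1 = (βH b).1) :
    Function.Injective f.mapN ∧ Function.Injective f.mapA := by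
  haveI := G.finN
  -- boundary facts
  have hbd : ∀ a (ha : a ∈ G.inBoundary), f.mapA a = (βH (βG.symm ⟨a, ha⟩)).1 := by
    intro a ha
    have h1 := hB (βG.symm ⟨a, ha⟩)
    rw [Equiv.apply_symm_apply] at h1
    exact h1
  have hGbd : ∀ a (ha : a ∈ G.inBoundary), f.mapA a ∈ H.inBoundary := by
    intro a ha
    rw [hbd a ha]
    exact (βH (βG.symm ⟨a, ha⟩)).2
  have hbdinj : ∀ a a' (ha : a ∈ G.inBoundary) (ha' : a' ∈ G.inBoundary),
      f.mapA a = f.mapA a' → a = a' := by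
    intro a a' ha ha' h
    rw [hbd a ha, hbd a' ha'] at h
    have h2 : βH (βG.symm ⟨a, ha⟩) = βH (βG.symm ⟨a', ha'⟩) := Subtype.ext h
    have h3 := βG.symm.injective (βH.injective h2)
    exact congrArg Subtype.val h3
  have hwf : WellFounded (Relation.TransGen G.prec) := by
    haveI : IsIrrefl G.N (Relation.TransGen G.prec) := ⟨hG⟩
    exact Finite.wellFounded_of_trans_of_irrefl _
  have hN : Function.Injective f.mapN := by
    intro x x' hxx'
    refine hwf.induction (C := fun x => ∀ x', f.mapN x = f.mapN x' → x = x') x ?_ x' hxx'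
    clear hxx' x x'
    intro x IH x' hxx'
    obtain ⟨i, hi⟩ := hground (q.mapN (f.mapN x))
    obtain ⟨m', ⟨hsrc, -⟩, -⟩ := q.etale_in (f.mapN x) i hi
    obtain ⟨m, ⟨hm1, hm2⟩, -⟩ := f.etale_in x m' hsrc
    obtain ⟨m₁, ⟨hm1', hm2'⟩, -⟩ := f.etale_in x' m' (hsrc.trans hxx')
    have ha : f.mapA (G.srcEdge m) = f.mapA (G.srcEdge m₁) := by
      rw [← f.comm_srcEdge, ← f.comm_srcEdge, hm2, hm2']
    have haa : G.srcEdge m = G.srcEdge m₁ := by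
      by_cases hb : G.srcEdge m ∈ G.inBoundary
      · have hb1 : f.mapA (G.srcEdge m₁) ∈ H.inBoundary := ha ▸ hGbd _ hb
        have hb' : G.srcEdge m₁ ∈ G.inBoundary := by
          by_contra hc
          simp only [PNGraph.inBoundary, Set.mem_setOf_eq, not_not] at hc
          obtain ⟨o, ho⟩ := hc
          exact hb1 ⟨f.mapNA o, (f.comm_tgtEdge o).trans (congrArg f.mapA ho)⟩
        exact hbdinj _ _ hb hb' ha
      · simp only [PNGraph.inBoundary, Set.mem_setOf_eq, not_not] at hb
        obtain ⟨o, ho⟩ := hb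
        have hb' : G.srcEdge m₁ ∉ G.inBoundary := by
          intro hc
          have := hGbd _ hc
          rw [← ha, ← ho, ← f.comm_tgtEdge] at this
          exact this ⟨f.mapNA o, rfl⟩
        simp only [PNGraph.inBoundary, Set.mem_setOf_eq, not_not] at hb'
        obtain ⟨o₁, ho₁⟩ := hb'
        have h6 : f.mapNA o = f.mapNA o₁ := by
          apply H.inj_tgtEdge
          rw [f.comm_tgtEdge, f.comm_tgtEdge, ho, ho₁]
          exact ha
        have hz : f.mapN (G.tgtNode o) = f.mapN (G.tgtNode o₁) := by
          rw [← f.comm_tgtNode, ← f.comm_tgtNode, h6]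
        have hprec : G.prec (G.tgtNode o) x := ⟨o, m, rfl, hm1, ho⟩
        have hzz : G.tgtNode o = G.tgtNode o₁ :=
          IH _ (Relation.TransGen.single hprec) _ hz
        obtain ⟨o₂, -, hou⟩ := f.etale_out (G.tgtNode o) (f.mapNA o) (f.comm_tgtNode o)
        have e1 : o = o₂ := hou o ⟨rfl, rfl⟩
        have e2 : o₁ = o₂ := hou o₁ ⟨hzz.symm, h6.symm⟩
        rw [← ho, ← ho₁, e1.trans e2.symm]
    have hmm : m = m₁ := G.inj_srcEdge haa
    rw [← hm1, ← hm1', hmm]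
  refine ⟨hN, ?_⟩
  intro a a' haa
  by_cases hb : a ∈ G.inBoundary
  · have hb1 : f.mapA a' ∈ H.inBoundary := haa ▸ hGbd _ hb
    have hb' : a' ∈ G.inBoundary := by
      by_contra hc
      simp only [PNGraph.inBoundary, Set.mem_setOf_eq, not_not] at hc
      obtain ⟨o, ho⟩ := hc
      exact hb1 ⟨f.mapNA o, (f.comm_tgtEdge o).trans (congrArg f.mapA ho)⟩
    exact hbdinj _ _ hb hb' haa
  · simp only [PNGraph.inBoundary, Set.mem_setOf_eq, not_not] at hb
    obtain ⟨o, ho⟩ := hb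
    have hb' : a' ∉ G.inBoundary := by
      intro hc
      have := hGbd _ hc
      rw [← haa, ← ho, ← f.comm_tgtEdge] at this
      exact this ⟨f.mapNA o, rfl⟩
    simp only [PNGraph.inBoundary, Set.mem_setOf_eq, not_not] at hb'
    obtain ⟨o₁, ho₁⟩ := hb'
    have h6 : f.mapNA o = f.mapNA o₁ := by
      apply H.inj_tgtEdge
      rw [f.comm_tgtEdge, f.comm_tgtEdge, ho, ho₁]
      exact haa
    have hz : G.tgtNode o = G.tgtNode o₁ := by
      apply hN
      rw [← f.comm_tgtNode, ← f.comm_tgtNode, h6]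
    obtain ⟨o₂, -, hou⟩ := f.etale_out (G.tgtNode o) (f.mapNA o) (f.comm_tgtNode o)
    have e1 : o = o₂ := hou o ⟨rfl, rfl⟩
    have e2 : o₁ = o₂ := hou o₁ ⟨hz.symm, h6.symm⟩
    rw [← ho, ← ho₁, e1.trans e2.symm]
end

section
/- Let P be a Petri net and let f : G ≅ G be an automorphism of a P-graph (an acyclic graph with an etale map p to P, with p ∘ f = p). If f fixes some node x, then f is the identity on the whole connected component of x (all nodes and edges connected to x). -/
/-- Edge `a` is incident to node `x`. -/
def PNGraph.incident (G : PNGraph) (a : G.A) (x : G.N) : Prop :=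
  (∃ m : G.AN, G.srcEdge m = a ∧ G.srcNode m = x) ∨
  (∃ o : G.NA, G.tgtEdge o = a ∧ G.tgtNode o = x)

/-- Two nodes are adjacent if they share an incident edge. -/
def PNGraph.adj (G : PNGraph) (x y : G.N) : Prop :=
  ∃ a : G.A, G.incident a x ∧ G.incident a y

/-- A `P`-graph has no infinitesimal automorphisms: if an automorphism of a
`P`-graph fixes a node `x`, it is the identity on the whole connected component
of `x` (all nodes connected to `x`, and all edges incident to them). -/
theorem no_infinitesimal_automorphisms (P : PetriNet)
    (G : PNGraph) (hG : G.Acyclic) (p : EtaleMap G P)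
    (f : GraphMap G G)
    (hisoA : Function.Bijective f.mapA) (hisoAN : Function.Bijective f.mapAN)
    (hisoN : Function.Bijective f.mapN) (hisoNA : Function.Bijective f.mapNA)
    (hover : f.OverP p p)
    (x : G.N) (hx : f.mapN x = x) :
    (∀ y : G.N, Relation.EqvGen G.adj x y → f.mapN y = y) ∧
    (∀ (a : G.A) (y : G.N), Relation.EqvGen G.adj x y → G.incident a y → f.mapA a = a) := by
  have hedge : ∀ (y : G.N), f.mapN y = y → ∀ a, G.incident a y → f.mapA a = a := by
    intro y hy a ha
    rcases ha with ⟨m, hma, hmy⟩ | ⟨o, hoa, hoy⟩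
    · obtain ⟨m', hm', huniq⟩ := p.etale_in y (p.mapI m) (by rw [p.comm_tI, hmy])
      have h1 : f.mapAN m = m' := huniq _ ⟨by rw [f.comm_srcNode, hmy, hy], hover.2.1 m⟩
      have h2 : m = m' := huniq _ ⟨hmy, rfl⟩
      rw [← hma, ← f.comm_srcEdge, h1, ← h2]
    · obtain ⟨o', ho', huniq⟩ := p.etale_out y (p.mapO o) (by rw [p.comm_tO, hoy])
      have h1 : f.mapNA o = o' := huniq _ ⟨by rw [f.comm_tgtNode, hoy, hy], hover.2.2.2 o⟩
      have h2 : o = o' := huniq _ ⟨hoy, rfl⟩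
      rw [← hoa, ← f.comm_tgtEdge, h1, ← h2]
  have hnode : ∀ (a : G.A), f.mapA a = a → ∀ z, G.incident a z → f.mapN z = z := by
    intro a ha z hz
    rcases hz with ⟨m, hma, hmz⟩ | ⟨o, hoa, hoz⟩
    · have h : f.mapAN m = m := G.inj_srcEdge (by rw [f.comm_srcEdge, hma, ha])
      rw [← hmz, ← f.comm_srcNode, h]
    · have h : f.mapNA o = o := G.inj_tgtEdge (by rw [f.comm_tgtEdge, hoa, ha])
      rw [← hoz, ← f.comm_tgtNode, h]
  have hstep : ∀ y z, G.adj y z → f.mapN y = y → f.mapN z = z := by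
    rintro y z ⟨a, hay, haz⟩ hy
    exact hnode a (hedge y hy a hay) z haz
  have hsymm : ∀ y z, G.adj y z → G.adj z y := by
    rintro y z ⟨a, h1, h2⟩; exact ⟨a, h2, h1⟩
  have hmain : ∀ y z, Relation.EqvGen G.adj y z → (f.mapN y = y ↔ f.mapN z = z) := by
    intro y z h
    induction h with
    | rel a b hab => exact ⟨hstep a b hab, hstep b a (hsymm a b hab)⟩
    | refl => exact Iff.rfl
    | symm _ _ _ ih => exact ih.symm
    | trans _ _ _ _ _ ih1 ih2 => exact ih1.trans ih2
  exact ⟨fun y hy => (hmain x y hy).mp hx,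
    fun a y hy ha => hedge y ((hmain x y hy).mp hx) a ha⟩
end

section
/- Let H' → H be an injective etale map of well-founded forward B-hypergraphs (a map inducing a bijection on in-boundaries B, with the pullback conditions of etale maps, and injective in each component). Then for every node y of H', the principal lowerset of y computed in H' coincides with the principal lowerset of y computed in H; in particular, for nodes x, y of H', x ⋖ y holds in H if and only if it holds in H'. -/
/-- An etale map of hypergraphs: componentwise maps commuting with the structure
maps, such that the two middle squares (over nodes) are pullbacks, and (the
`B`-map condition) the rightmost square (over the hyperedge sets, on the `O`
side) is a pullback. -/
structure EtaleBMap (H' H : DirHypergraph) where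
  mapA : H'.A → H.A
  mapI : H'.I → H.I
  mapN : H'.N → H.N
  mapO : H'.O → H.O
  comm_iA : ∀ i, H.iA (mapI i) = mapA (H'.iA i)
  comm_iN : ∀ i, H.iN (mapI i) = mapN (H'.iN i)
  comm_oN : ∀ o, H.oN (mapO o) = mapN (H'.oN o)
  comm_oA : ∀ o, H.oA (mapO o) = mapA (H'.oA o)
  etale_in : ∀ (x : H'.N) (i : H.I), H.iN i = mapN x →
      ∃! i' : H'.I, H'.iN i' = x ∧ mapI i' = i
  etale_out : ∀ (x : H'.N) (o : H.O), H.oN o = mapN x →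
      ∃! o' : H'.O, H'.oN o' = x ∧ mapO o' = o
  bmap : ∀ (a' : H'.A) (o : H.O), H.oA o = mapA a' →
      ∃! o' : H'.O, H'.oA o' = a' ∧ mapO o' = o

/-- Principal lowersets are preserved by injective etale `B`-maps of well-founded
forward `B`-hypergraphs: for nodes of `H'`, the relations `⋖` and `≤` computed
in `H'` coincide with those computed in `H`; in particular principal lowersets
of `H'` coincide with those of `H`. -/
theorem principal_lowersets_preserved (H' H : DirHypergraph)
    (hfwd' : H'.Forward) (hfwd : H.Forward)
    (hwf' : H'.WellFoundedHgr) (hwf : H.WellFoundedHgr)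
    (f : EtaleBMap H' H)
    (hinjA : Function.Injective f.mapA) (hinjI : Function.Injective f.mapI)
    (hinjN : Function.Injective f.mapN) (hinjO : Function.Injective f.mapO)
    (hbd : Set.BijOn f.mapA H'.inBoundary H.inBoundary) :
    (∀ x y : H'.N, H'.prec x y ↔ H.prec (f.mapN x) (f.mapN y)) ∧
    (∀ x y : H'.N, H'.le x y ↔ H.le (f.mapN x) (f.mapN y)) := by
  have hprec : ∀ x y : H'.N, H'.prec x y ↔ H.prec (f.mapN x) (f.mapN y) := by
    intro x y
    constructor
    · rintro ⟨o, i, ho, hi, ha⟩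
      exact ⟨f.mapO o, f.mapI i, by rw [f.comm_oN, ho], by rw [f.comm_iN, hi],
        by rw [f.comm_oA, f.comm_iA, ha]⟩
    · rintro ⟨o, i, ho, hi, ha⟩
      obtain ⟨i', ⟨hi'N, hi'map⟩, -⟩ := f.etale_in y i hi
      obtain ⟨o', ⟨ho'A, ho'map⟩, -⟩ :=
        f.bmap (H'.iA i') o (by rw [← f.comm_iA, hi'map, ha])
      refine ⟨o', i', ?_, hi'N, by rw [ho'A]⟩
      apply hinjN
      rw [← f.comm_oN, ho'map, ho]
  refine ⟨hprec, fun x y => ⟨fun h => ?_, fun h => ?_⟩⟩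
  · exact Relation.ReflTransGen.lift f.mapN (fun a b hab => (hprec a b).1 hab) x y h
  · have key : ∀ z, Relation.ReflTransGen H.prec (f.mapN x) z →
        ∀ y : H'.N, z = f.mapN y → H'.le x y := by
      intro z h
      induction h with
      | refl =>
        intro y hy
        cases hinjN hy
        exact Relation.ReflTransGen.refl
      | tail hab hbc ih =>
        intro y hy
        subst hy
        obtain ⟨o, i, ho, hi, ha⟩ := hbc
        obtain ⟨i', ⟨hi'N, hi'map⟩, -⟩ := f.etale_in y i hi
        obtain ⟨o', ⟨ho'A, ho'map⟩, -⟩ :=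
          f.bmap (H'.iA i') o (by rw [← f.comm_iA, hi'map, ha])
        exact Relation.ReflTransGen.tail (ih (H'.oN o') (by rw [← f.comm_oN, ho'map, ho]))
          ⟨o', i', rfl, hi'N, by rw [ho'A]⟩
    exact key _ h y rfl
end
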